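/- If D is atomic and (D,ρ) regenerate μ at every flaw, then for every flaw f_i and every σ ∈ f_i, Σ_{τ ∈ A(i,σ)} μ(τ) = μ(σ)/μ(f_i). -/
import Mathlib


/-- If the action digraph is atomic and `(D,ρ)` regenerate `μ` at every flaw, then for
every flaw `f i` and every `σ ∈ f i`, `∑_{τ ∈ A i σ} μ τ = μ σ / μ(f i)`. -/
theorem stmt_1 {Ω ι : Type*} [Fintype Ω] [DecidableEq Ω]
    (μ : Ω → ℝ) (hμpos : ∀ σ, 0 < μ σ) (hμ1 : ∑ σ, μ σ = 1)
    (f : ι → Finset Ω) (hf : ∀ i, (f i).Nonempty)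
    (A : ι → Ω → Finset Ω) (hA : ∀ i, ∀ σ ∈ f i, (A i σ).Nonempty)
    (ρ : ι → Ω → Ω → ℝ)
    (hρ0 : ∀ i σ τ, 0 ≤ ρ i σ τ)
    (hρsupp : ∀ i, ∀ σ ∈ f i, ∀ τ, τ ∉ A i σ → ρ i σ τ = 0)
    (hρsum : ∀ i, ∀ σ ∈ f i, ∑ τ, ρ i σ τ = 1)
    (hatomic : ∀ i (τ : Ω), ∀ σ ∈ f i, ∀ σ' ∈ f i, τ ∈ A i σ → τ ∈ A i σ' → σ = σ')
    (hregen : ∀ i (τ : Ω), (∑ σ ∈ f i, μ σ * ρ i σ τ) / (∑ σ ∈ f i, μ σ) = μ τ) :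
    ∀ i, ∀ σ ∈ f i, ∑ τ ∈ A i σ, μ τ = μ σ / (∑ σ' ∈ f i, μ σ') := by
  intro i σ hσ
  have key : ∀ τ ∈ A i σ, μ τ = μ σ * ρ i σ τ / (∑ σ' ∈ f i, μ σ') := by
    intro τ hτ
    have h1 : (∑ σ' ∈ f i, μ σ' * ρ i σ' τ) = μ σ * ρ i σ τ := by
      rw [Finset.sum_eq_single_of_mem σ hσ]
      intro σ' hσ' hne
      have : τ ∉ A i σ' := fun h => hne (hatomic i τ σ' hσ' σ hσ h hτ)
      rw [hρsupp i σ' hσ' τ this, mul_zero]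
    rw [← hregen i τ, h1]
  rw [Finset.sum_congr rfl key, ← Finset.sum_div, ← Finset.mul_sum]
  congr 1
  have : ∑ τ ∈ A i σ, ρ i σ τ = ∑ τ, ρ i σ τ := by
    apply Finset.sum_subset (Finset.subset_univ _)
    intro τ _ hτ
    exact hρsupp i σ hσ τ hτ
  rw [this, hρsum i σ hσ, mul_one]
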